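/- Suppose Z ∈ ℂ, d_k ≥ 0 for k ≥ 0, E_k ∈ ℝ, and |Z - ∑_k d_k exp(iE_k)| ≤ β with (β + ∑_{k≥1} d_k)/d_0 ≤ 1. Then |Z - d_0 exp(iE_0)| ≤ β + ∑_{k≥1} d_k, and the angular distance between arg(Z) and E_0 (mod 2π) is at most arcsin((β + ∑_{k≥1} d_k)/d_0). -/

import Mathlib

open Complex

/-- Distance between two angles on the circle `ℝ / 2πℤ`. -/
noncomputable def circleDist (θ φ : ℝ) : ℝ := ⨅ k : ℤ, |θ - φ + 2 * (k : ℝ) * Real.pi|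

theorem circleDist_le (θ φ : ℝ) (k : ℤ) :
    circleDist θ φ ≤ |θ - φ + 2 * (k : ℝ) * Real.pi| :=
  ciInf_le ⟨0, fun x hx => by rcases hx with ⟨j, rfl⟩; positivity⟩ k

/-- If `Z` is `β`-close to `∑ k, d k exp(i E k)` and `(β + ∑_{k ≥ 1} d k)/d 0 ≤ 1`, then
`|Z - d 0 exp(i E 0)| ≤ β + ∑_{k ≥ 1} d k` and the angular distance between `arg Z` and
`E 0` is at most `arcsin ((β + ∑_{k ≥ 1} d k)/d 0)`. -/
theorem dominant_component_phase_bound {K : ℕ} (Z : ℂ) (d E : Fin (K + 1) → ℝ)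
    (hd : ∀ k, 0 ≤ d k) (hd0 : 0 < d 0) (hZ : Z ≠ 0) (β : ℝ)
    (hclose :
      ‖Z - ∑ k, ((d k : ℝ) : ℂ) * Complex.exp (Complex.I * (E k : ℂ))‖ ≤ β)
    (hratio : (β + ∑ k ∈ Finset.univ.erase 0, d k) / d 0 ≤ 1) :
    ‖Z - ((d 0 : ℝ) : ℂ) * Complex.exp (Complex.I * (E 0 : ℂ))‖ ≤
        β + ∑ k ∈ Finset.univ.erase 0, d k ∧
    circleDist Z.arg (E 0) ≤
      Real.arcsin ((β + ∑ k ∈ Finset.univ.erase 0, d k) / d 0) := by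
  set r : ℝ := β + ∑ k ∈ Finset.univ.erase 0, d k with hrdef
  have hβ : 0 ≤ β := le_trans (norm_nonneg _) hclose
  have hsum : 0 ≤ ∑ k ∈ Finset.univ.erase 0, d k :=
    Finset.sum_nonneg fun k _ => hd k
  have hr0 : 0 ≤ r := add_nonneg hβ hsum
  have hrd : r ≤ d 0 := by rwa [div_le_one hd0] at hratio
  -- Part 1
  have hpart1 : ‖Z - ((d 0 : ℝ) : ℂ) * Complex.exp (Complex.I * (E 0 : ℂ))‖ ≤ r := by
    have hsplit : (∑ k, ((d k : ℝ) : ℂ) * Complex.exp (Complex.I * (E k : ℂ)))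
        = ((d 0 : ℝ) : ℂ) * Complex.exp (Complex.I * (E 0 : ℂ))
          + ∑ k ∈ Finset.univ.erase 0, ((d k : ℝ) : ℂ) * Complex.exp (Complex.I * (E k : ℂ)) :=
      (Finset.add_sum_erase _ _ (Finset.mem_univ 0)).symm
    have hsumabs : ‖∑ k ∈ Finset.univ.erase 0,
        ((d k : ℝ) : ℂ) * Complex.exp (Complex.I * (E k : ℂ))‖
        ≤ ∑ k ∈ Finset.univ.erase 0, d k := by
      refine le_trans (norm_sum_le _ _) (le_of_eq ?_)
      refine Finset.sum_congr rfl fun k _ => ?_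
      rw [norm_mul, Complex.norm_exp, Complex.norm_real, Real.norm_eq_abs, _root_.abs_of_nonneg (hd k)]
      simp
    calc ‖Z - ((d 0 : ℝ) : ℂ) * Complex.exp (Complex.I * (E 0 : ℂ))‖
        = ‖(Z - ∑ k, ((d k : ℝ) : ℂ) * Complex.exp (Complex.I * (E k : ℂ)))
          + ∑ k ∈ Finset.univ.erase 0, ((d k : ℝ) : ℂ) * Complex.exp (Complex.I * (E k : ℂ))‖ := by
          rw [hsplit]; ring_nf
      _ ≤ _ := norm_add_le _ _
      _ ≤ r := by rw [hrdef]; exact add_le_add hclose hsumabs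
  refine ⟨hpart1, ?_⟩
  -- Part 2
  set u : ℂ := Z * Complex.exp (Complex.I * ((-(E 0) : ℝ) : ℂ)) with hu
  have hu0 : u ≠ 0 := mul_ne_zero hZ (Complex.exp_ne_zero _)
  -- |u - d 0| ≤ r
  have hcancel : ((d 0 : ℝ) : ℂ) * Complex.exp (Complex.I * (E 0 : ℂ))
      * Complex.exp (Complex.I * ((-(E 0) : ℝ) : ℂ)) = ((d 0 : ℝ) : ℂ) := by
    rw [mul_assoc, ← Complex.exp_add]
    have h0 : Complex.I * (E 0 : ℂ) + Complex.I * ((-(E 0) : ℝ) : ℂ) = 0 := by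
      push_cast; ring
    rw [h0, Complex.exp_zero, mul_one]
  have hud : ‖u - ((d 0 : ℝ) : ℂ)‖ ≤ r := by
    have heq : u - ((d 0 : ℝ) : ℂ)
        = (Z - ((d 0 : ℝ) : ℂ) * Complex.exp (Complex.I * (E 0 : ℂ)))
          * Complex.exp (Complex.I * ((-(E 0) : ℝ) : ℂ)) := by
      rw [sub_mul, hcancel, hu]
    rw [heq, norm_mul, Complex.norm_exp]
    simpa using hpart1
  have him : |u.im| ≤ r := by
    have h1 := Complex.abs_im_le_norm (u - ((d 0 : ℝ) : ℂ))
    simp only [Complex.sub_im, Complex.ofReal_im, sub_zero] at h1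
    exact h1.trans hud
  have hre : d 0 - r ≤ u.re := by
    have h1 := Complex.abs_re_le_norm (u - ((d 0 : ℝ) : ℂ))
    simp only [Complex.sub_re, Complex.ofReal_re] at h1
    have h2 := abs_le.1 (h1.trans hud)
    linarith [h2.1]
  have hre0 : 0 ≤ u.re := by linarith
  have habspos : 0 < ‖u‖ := norm_pos_iff.mpr hu0
  -- key inequality
  have hkey : |u.im| * d 0 ≤ r * ‖u‖ := by
    have habsu : ‖u‖ ^ 2 = u.re ^ 2 + u.im ^ 2 := by
      rw [Complex.sq_norm, Complex.normSq_apply]; ring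
    have hcirc : (u.re - d 0) ^ 2 + u.im ^ 2 ≤ r ^ 2 := by
      have h1 : ‖u - ((d 0 : ℝ) : ℂ)‖ ^ 2 ≤ r ^ 2 :=
        pow_le_pow_left₀ (norm_nonneg _) hud 2
      rw [Complex.sq_norm, Complex.normSq_apply] at h1
      simp only [Complex.sub_re, Complex.sub_im, Complex.ofReal_re, Complex.ofReal_im,
        sub_zero] at h1
      nlinarith [h1]
    have hd2 : 0 ≤ d 0 ^ 2 - r ^ 2 := by nlinarith
    have h2 : u.im ^ 2 * (d 0 ^ 2 - r ^ 2) ≤ (r ^ 2 - (u.re - d 0) ^ 2) * (d 0 ^ 2 - r ^ 2) := by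
      nlinarith [hcirc, hd2]
    have h3 : u.im ^ 2 * d 0 ^ 2 ≤ r ^ 2 * ‖u‖ ^ 2 := by
      nlinarith [h2, sq_nonneg (d 0 * u.re - (d 0 ^ 2 - r ^ 2)), habsu]
    have h4 : (|u.im| * d 0) ^ 2 ≤ (r * ‖u‖) ^ 2 := by
      rw [mul_pow, mul_pow, _root_.sq_abs]; exact h3
    exact (pow_le_pow_iff_left₀ (by positivity) (by positivity) two_ne_zero).mp h4
  -- sin |arg u| ≤ r / d 0
  have hsin : Real.sin |u.arg| = |u.im| / ‖u‖ := by
    rcases le_or_gt 0 u.arg with h | h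
    · have him0 : 0 ≤ u.im := Complex.arg_nonneg_iff.mp h
      rw [_root_.abs_of_nonneg h, Complex.sin_arg, _root_.abs_of_nonneg him0]
    · have him0 : u.im < 0 := Complex.arg_neg_iff.mp h
      rw [_root_.abs_of_neg h, Real.sin_neg, Complex.sin_arg, _root_.abs_of_neg him0, neg_div]
  have hsinle : Real.sin |u.arg| ≤ r / d 0 := by
    rw [hsin, div_le_div_iff₀ habspos hd0]
    linarith [hkey]
  have hhalf : |u.arg| ≤ Real.pi / 2 := Complex.abs_arg_le_pi_div_two_iff.mpr hre0
  have hargle : |u.arg| ≤ Real.arcsin (r / d 0) := by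
    rw [Real.le_arcsin_iff_sin_le ⟨by linarith [abs_nonneg u.arg, Real.pi_pos], hhalf⟩
      ⟨le_trans (by norm_num) (div_nonneg hr0 hd0.le), hratio⟩]
    exact hsinle
  -- relate arg u to arg Z - E 0
  have hangle : ((u.arg : ℝ) : Real.Angle) = ((Z.arg - E 0 : ℝ) : Real.Angle) := by
    have hexp : ((Complex.arg (Complex.exp (Complex.I * ((-(E 0) : ℝ) : ℂ))) : ℝ) : Real.Angle)
        = ((-(E 0) : ℝ) : Real.Angle) := by
      rw [mul_comm, Complex.exp_mul_I, ← Complex.ofReal_cos, ← Complex.ofReal_sin]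
      simpa [Real.Angle.cos_coe, Real.Angle.sin_coe] using
        Complex.arg_cos_add_sin_mul_I_coe_angle ((-(E 0) : ℝ) : Real.Angle)
    rw [hu, Complex.arg_mul_coe_angle hZ (Complex.exp_ne_zero _), hexp,
      ← Real.Angle.coe_add]
    norm_num [sub_eq_add_neg]
  obtain ⟨k, hk⟩ := Real.Angle.angle_eq_iff_two_pi_dvd_sub.mp hangle
  have hdist : circleDist Z.arg (E 0) ≤ |u.arg| := by
    have : Z.arg - E 0 + 2 * ((k : ℤ) : ℝ) * Real.pi = u.arg := by
      push_cast
      push_cast at hk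
      linarith
    calc circleDist Z.arg (E 0) ≤ |Z.arg - E 0 + 2 * ((k : ℤ) : ℝ) * Real.pi| :=
          circleDist_le _ _ k
      _ = |u.arg| := by rw [this]
  exact hdist.trans hargle
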